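/- Fix a prime p and 0 < ε < 1/2 with ε rational. Suppose the closed interval [0, 1/2] is covered by a finite union of closed intervals, each of the form [c/(p^n+1), c/(p^n−1)] (type 1, with c, n positive integers) or [c/(p^n d) − ε/(p^n d²), c/(p^n d) + ε/(p^n d²)] (type 2, with c ≥ 0, d, n ≥ 0 integers, d ≥ 1). Then every real x satisfies liminf_{q→∞} q·|q|_p·‖qx‖ < ε. -/

import Mathlib

open Filter

noncomputable def padicAbs (p q : ℕ) : ℝ := (p : ℝ) ^ (-(padicValNat p q : ℤ))

noncomputable def distNearestInt (x : ℝ) : ℝ := |x - round x|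

noncomputable def plcQty (p : ℕ) (x : ℝ) (q : ℕ) : ℝ :=
  (q : ℝ) * padicAbs p q * distNearestInt ((q : ℝ) * x)

/-- Closure of a type-1 interval `I_1(c,n)`. -/
noncomputable def I1c (p c n : ℕ) : Set ℝ :=
  Set.Icc ((c : ℝ) / ((p : ℝ) ^ n + 1)) ((c : ℝ) / ((p : ℝ) ^ n - 1))

/-- Closure of a type-2 interval `I_2(c,d,n)`. -/
noncomputable def I2c (p : ℕ) (ε : ℝ) (c d n : ℕ) : Set ℝ :=
  Set.Icc ((c : ℝ) / ((p : ℝ) ^ n * d) - ε / ((p : ℝ) ^ n * (d : ℝ) ^ 2))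
    ((c : ℝ) / ((p : ℝ) ^ n * d) + ε / ((p : ℝ) ^ n * (d : ℝ) ^ 2))


lemma dnn_nonneg (x : ℝ) : 0 ≤ distNearestInt x := abs_nonneg _
lemma dnn_le_half (x : ℝ) : distNearestInt x ≤ 1/2 := abs_sub_round x

lemma dnn_sub_int (x : ℝ) (m : ℤ) : distNearestInt (x - m) = distNearestInt x := by
  unfold distNearestInt
  rw [round_sub_intCast]
  push_cast
  ring_nf

lemma dnn_neg (x : ℝ) : distNearestInt (-x) = distNearestInt x := by
  unfold distNearestInt
  rw [abs_sub_round_eq_min, abs_sub_round_eq_min]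
  rcases eq_or_ne (Int.fract x) 0 with h | h
  · have hx : x = (⌊x⌋ : ℝ) := by
      have := Int.floor_add_fract x
      rw [h] at this; linarith
    have h2 : Int.fract (-x) = 0 := by
      rw [hx, ← Int.cast_neg, Int.fract_intCast]
    rw [h, h2]
  · rw [Int.fract_neg h, min_comm]
    ring_nf

lemma dnn_abs (x : ℝ) : distNearestInt |x| = distNearestInt x := by
  rcases abs_cases x with ⟨h, _⟩ | ⟨h, _⟩
  · rw [h]
  · rw [h, dnn_neg]

lemma dnn_le (x : ℝ) (m : ℤ) : distNearestInt x ≤ |x - m| := by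
  unfold distNearestInt
  rw [abs_sub_round_eq_min]
  have hx : (⌊x⌋ : ℝ) + Int.fract x = x := Int.floor_add_fract x
  have hf0 := Int.fract_nonneg x
  have hf1 := Int.fract_lt_one x
  rcases le_or_gt m ⌊x⌋ with h | h
  · have hm : (m:ℝ) ≤ (⌊x⌋:ℝ) := by exact_mod_cast h
    have : Int.fract x ≤ |x - m| := by
      rw [abs_of_nonneg (by linarith)]; linarith
    exact le_trans (min_le_left _ _) this
  · have hm : (⌊x⌋:ℝ) + 1 ≤ (m:ℝ) := by exact_mod_cast h
    have : 1 - Int.fract x ≤ |x - m| := by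
      rw [abs_of_nonpos (by linarith)]; linarith
    exact le_trans (min_le_right _ _) this

lemma dnn_lipschitz (a b : ℝ) : distNearestInt a ≤ |a - b| + distNearestInt b := by
  refine le_trans (dnn_le a (round b)) ?_
  unfold distNearestInt
  calc |a - round b| = |(a - b) + (b - round b)| := by ring_nf
  _ ≤ |a - b| + |b - round b| := abs_add_le _ _

lemma dnn_of_mem {t : ℝ} (h0 : 0 ≤ t) (h2 : t ≤ 1/2) : distNearestInt t = t := by
  unfold distNearestInt
  rcases lt_or_eq_of_le h2 with h | h
  · rw [round_eq, Int.floor_eq_zero_iff.mpr (by constructor <;> simp <;> linarith)]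
    simp [abs_of_nonneg h0]
  · rw [h]; norm_num [round_eq]

lemma dnn_nat_mul (b : ℕ) (y : ℝ) :
    distNearestInt ((b:ℝ) * distNearestInt y) = distNearestInt ((b:ℝ) * y) := by
  have key : (b:ℝ) * distNearestInt y = |(b:ℝ)*y - ((b : ℤ) * round y : ℤ)| := by
    unfold distNearestInt
    rw [← abs_of_nonneg (b.cast_nonneg (α := ℝ)), ← abs_mul]
    push_cast
    rw [mul_sub, abs_of_nonneg (b.cast_nonneg (α := ℝ))]
  rw [key, dnn_abs, dnn_sub_int]


lemma plc_nonneg (p : ℕ) (hp : p.Prime) (x : ℝ) (q : ℕ) : 0 ≤ plcQty p x q := by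
  have hp0 : (0:ℝ) < p := by exact_mod_cast hp.pos
  exact mul_nonneg (mul_nonneg q.cast_nonneg (zpow_nonneg hp0.le _)) (dnn_nonneg _)

lemma plc_le (p : ℕ) (hp : p.Prime) (x : ℝ) (j b : ℕ) (hb : 1 ≤ b) :
    plcQty p x (p^j * b) ≤ (b:ℝ) * distNearestInt ((p:ℝ)^j * b * x) := by
  haveI : Fact p.Prime := ⟨hp⟩
  have hb0 : b ≠ 0 := by omega
  have hp0 : (0:ℝ) < p := by exact_mod_cast hp.pos
  have hp1 : (1:ℝ) ≤ p := by exact_mod_cast hp.one_lt.le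
  have hv : padicValNat p (p^j * b) = j + padicValNat p b := by
    rw [padicValNat.mul (pow_ne_zero _ hp.ne_zero) hb0, padicValNat.prime_pow]
  unfold plcQty padicAbs
  rw [hv]
  have hcast : ((p^j * b : ℕ) : ℝ) = (p:ℝ)^j * b := by push_cast; ring
  rw [hcast]
  have hz : (p:ℝ) ^ (-(↑(j + padicValNat p b) : ℤ)) =
      (p:ℝ)^(-(j:ℤ)) * (p:ℝ)^(-(padicValNat p b : ℤ)) := by
    rw [← zpow_add₀ (ne_of_gt hp0)]; push_cast; ring_nf
  rw [hz]
  have hpj : (p:ℝ)^j * (p:ℝ)^(-(j:ℤ)) = 1 := by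
    rw [← zpow_natCast (p:ℝ) j, ← zpow_add₀ (ne_of_gt hp0)]; simp
  have hle1 : (p:ℝ)^(-(padicValNat p b : ℤ)) ≤ 1 :=
    zpow_le_one_of_nonpos₀ hp1 (by omega)
  have hd := dnn_nonneg ((p:ℝ)^j * b * x)
  have hb0' : (0:ℝ) ≤ b := b.cast_nonneg
  calc (p:ℝ)^j * b * ((p:ℝ)^(-(j:ℤ)) * (p:ℝ)^(-(padicValNat p b:ℤ))) *
        distNearestInt ((p:ℝ)^j * b * x)
      = (b:ℝ) * (p:ℝ)^(-(padicValNat p b:ℤ)) * distNearestInt ((p:ℝ)^j * b * x) := by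
        rw [show (p:ℝ)^j * b * ((p:ℝ)^(-(j:ℤ)) * (p:ℝ)^(-(padicValNat p b:ℤ)))
          = ((p:ℝ)^j * (p:ℝ)^(-(j:ℤ))) * ((b:ℝ) * (p:ℝ)^(-(padicValNat p b:ℤ))) by ring,
          hpj, one_mul]
    _ ≤ (b:ℝ) * 1 * distNearestInt ((p:ℝ)^j * b * x) := by
        apply mul_le_mul_of_nonneg_right _ hd
        apply mul_le_mul_of_nonneg_left hle1 hb0'
    _ = (b:ℝ) * distNearestInt ((p:ℝ)^j * b * x) := by ring

lemma liminf_le_of_freq (p : ℕ) (hp : p.Prime) (x : ℝ) (C : ℝ) (b : ℕ) (hb : 1 ≤ b)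
    (h : ∃ᶠ j in atTop, (b:ℝ) * distNearestInt ((p:ℝ)^j * b * x) ≤ C) :
    liminf (plcQty p x) atTop ≤ C := by
  have hbdd : IsBoundedUnder (· ≥ ·) atTop (plcQty p x) :=
    isBoundedUnder_of ⟨0, fun q => plc_nonneg p hp x q⟩
  apply liminf_le_of_frequently_le _ hbdd
  rw [frequently_atTop] at h ⊢
  intro a
  obtain ⟨j, hj, hjP⟩ := h a
  refine ⟨p^j * b, ?_, le_trans (plc_le p hp x j b hb) hjP⟩
  calc a ≤ j := hj
  _ ≤ 2^j := Nat.lt_two_pow_self.le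
  _ ≤ p^j := Nat.pow_le_pow_left hp.two_le j
  _ ≤ p^j * b := Nat.le_mul_of_pos_right _ (by omega)

theorem stmt_9 (p : ℕ) (hp : p.Prime) (ε : ℝ) (hε0 : 0 < ε) (hε2 : ε < 1 / 2)
    (hεrat : ∃ r : ℚ, ε = (r : ℝ))
    (T1 : Finset (ℕ × ℕ)) (hT1 : ∀ cn ∈ T1, 1 ≤ cn.1 ∧ 1 ≤ cn.2)
    (T2 : Finset (ℕ × ℕ × ℕ)) (hT2 : ∀ cdn ∈ T2, 1 ≤ cdn.2.1)
    (hcov : Set.Icc (0 : ℝ) (1 / 2) ⊆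
      (⋃ cn ∈ T1, I1c p cn.1 cn.2) ∪ ⋃ cdn ∈ T2, I2c p ε cdn.1 cdn.2.1 cdn.2.2) :
    ∀ x : ℝ, liminf (plcQty p x) atTop < ε := by
  intro x
  have hp2 : (2:ℝ) ≤ (p:ℝ) := by exact_mod_cast hp.two_le
  have hp0 : (0:ℝ) < p := by linarith
  set z : ℕ → ℝ := fun j => distNearestInt ((p:ℝ)^j * x) with hzdef
  have hz0 : ∀ j, 0 ≤ z j := fun j => dnn_nonneg _
  have hz2 : ∀ j, z j ≤ 1/2 := fun j => dnn_le_half _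
  -- the shift relation
  have hshift : ∀ j n : ℕ, z (j + n) = distNearestInt (((p:ℝ)^n) * z j) := by
    intro j n
    have : ((p ^ n : ℕ) : ℝ) * distNearestInt ((p:ℝ)^j * x)
        = (p:ℝ)^n * z j := by push_cast; rfl
    rw [hzdef]
    simp only []
    rw [← this, dnn_nat_mul]
    congr 1
    push_cast
    ring
  set L : Set ℝ := {y | ∀ δ > (0:ℝ), ∃ᶠ j in atTop, |z j - y| < δ} with hLdef
  have hLsub : L ⊆ Set.Icc 0 (1/2) := by
    intro y hy
    constructor
    · by_contra h
      push_neg at h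
      obtain ⟨j, hj⟩ := (hy (-y) (by linarith)).exists
      rw [abs_lt] at hj
      have := hz0 j
      linarith [hj.2]
    · by_contra h
      push_neg at h
      obtain ⟨j, hj⟩ := (hy (y - 1/2) (by linarith)).exists
      rw [abs_lt] at hj
      have := hz2 j
      linarith [hj.1]
  have hLne : L.Nonempty := by
    obtain ⟨a, -, φ, hφ, hconv⟩ :=
      tendsto_subseq_of_bounded (Metric.isBounded_Icc (0:ℝ) (1/2))
        (fun j => Set.mem_Icc.mpr ⟨hz0 j, hz2 j⟩)
    refine ⟨a, fun δ hδ => ?_⟩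
    rw [frequently_atTop]
    intro a0
    obtain ⟨N, hN⟩ := Metric.tendsto_atTop.mp hconv δ hδ
    refine ⟨φ (max N a0), le_trans (le_max_right _ _) hφ.le_apply, ?_⟩
    have := hN (max N a0) (le_max_left _ _)
    rwa [Real.dist_eq] at this
  have hLbdd : BddBelow L := ⟨0, fun y hy => (hLsub hy).1⟩
  set s : ℝ := sInf L with hsdef
  have hsL : s ∈ L := by
    intro δ hδ
    obtain ⟨y, hyL, hys⟩ := exists_lt_of_csInf_lt hLne
      (lt_add_of_pos_right s (half_pos hδ))
    have hy_ge : s ≤ y := csInf_le hLbdd hyL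
    refine (hyL (δ/2) (half_pos hδ)).mono fun j hj => ?_
    rw [abs_lt] at hj ⊢
    constructor <;> linarith [hj.1, hj.2]
  have hs01 : s ∈ Set.Icc (0:ℝ) (1/2) := hLsub hsL
  by_cases hrat : ∃ r : ℚ, s = (r:ℝ)
  · -- rational cluster point: liminf ≤ ε/2
    obtain ⟨r, hr⟩ := hrat
    set b : ℕ := r.den with hbdef
    have hb : 1 ≤ b := r.den_pos
    have hb0 : (0:ℝ) < b := by exact_mod_cast hb
    have hnum : (b:ℝ) * s = (r.num : ℝ) := by
      rw [hr]
      exact_mod_cast congrArg (Rat.cast : ℚ → ℝ) (Rat.den_mul_eq_num r)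
    have hδ : (0:ℝ) < ε / (2 * b^2) := by positivity
    refine lt_of_le_of_lt (liminf_le_of_freq p hp x (ε/2) b hb ?_) (by linarith)
    refine (hsL _ hδ).mono fun j hj => ?_
    have he : distNearestInt ((p:ℝ)^j * b * x) = distNearestInt ((b:ℝ) * z j) := by
      rw [hzdef]
      simp only []
      rw [dnn_nat_mul]
      congr 1
      ring
    have hle : distNearestInt ((b:ℝ) * z j) ≤ |(b:ℝ) * z j - (r.num : ℤ)| :=
      dnn_le _ _
    have heq : |(b:ℝ) * z j - ((r.num : ℤ):ℝ)| = (b:ℝ) * |z j - s| := by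
      have h9 : (b:ℝ) * z j - ((r.num:ℤ):ℝ) = (b:ℝ) * (z j - s) := by
        push_cast
        rw [← hnum]; ring
      rw [h9, abs_mul, abs_of_pos hb0]
    have : distNearestInt ((p:ℝ)^j * b * x) ≤ (b:ℝ) * (ε / (2 * b^2)) := by
      rw [he]
      refine le_trans hle ?_
      rw [heq]
      exact mul_le_mul_of_nonneg_left hj.le hb0.le
    calc (b:ℝ) * distNearestInt ((p:ℝ)^j * b * x)
        ≤ (b:ℝ) * ((b:ℝ) * (ε / (2 * b^2))) := mul_le_mul_of_nonneg_left this hb0.le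
      _ = ε / 2 := by field_simp
  · -- s irrational
    have hcov' := hcov hs01
    rw [Set.mem_union] at hcov'
    rcases hcov' with h1 | h2
    · -- type 1 interval: contradiction
      exfalso
      rw [Set.mem_iUnion₂] at h1
      obtain ⟨⟨c, n⟩, hT, hmem⟩ := h1
      obtain ⟨hc, hn⟩ := hT1 _ hT
      simp only [I1c, Set.mem_Icc] at hmem
      have hpn2 : (2:ℝ) ≤ (p:ℝ)^n := by
        calc (2:ℝ) ≤ (p:ℝ) := hp2
        _ = (p:ℝ)^1 := (pow_one _).symm
        _ ≤ (p:ℝ)^n := pow_le_pow_right₀ (by linarith) hn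
      have hc0 : (0:ℝ) < c := by exact_mod_cast hc
      -- strict inequalities
      have hne2 : s ≠ (c:ℝ)/((p:ℝ)^n - 1) := by
        intro h
        exact hrat ⟨(c:ℚ)/((p:ℚ)^n - 1), by rw [h]; push_cast; ring⟩
      have hne1 : s ≠ (c:ℝ)/((p:ℝ)^n + 1) := by
        intro h
        exact hrat ⟨(c:ℚ)/((p:ℚ)^n + 1), by rw [h]; push_cast; ring⟩
      have hlt2 : s < (c:ℝ)/((p:ℝ)^n - 1) := lt_of_le_of_ne hmem.2 hne2
      have hgt1 : (c:ℝ)/((p:ℝ)^n + 1) < s := lt_of_le_of_ne hmem.1 (Ne.symm hne1)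
      have hs0 : 0 < s := lt_trans (by positivity) hgt1
      have habs : |(p:ℝ)^n * s - c| < s := by
        rw [abs_lt]
        constructor
        · have := (div_lt_iff₀ (by linarith : (0:ℝ) < (p:ℝ)^n + 1)).mp hgt1
          nlinarith
        · have := (lt_div_iff₀ (by linarith : (0:ℝ) < (p:ℝ)^n - 1)).mp hlt2
          nlinarith
      set s' : ℝ := |(p:ℝ)^n * s - c| with hs'def
      have hs'0 : 0 ≤ s' := abs_nonneg _
      have hs'half : s' ≤ 1/2 := le_trans habs.le hs01.2
      have hdnns : distNearestInt ((p:ℝ)^n * s) = s' := by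
        have h1 : distNearestInt ((p:ℝ)^n * s) = distNearestInt ((p:ℝ)^n * s - ((c:ℤ):ℝ)) := by
          rw [dnn_sub_int]
        rw [h1]
        have : ((c:ℤ):ℝ) = (c:ℝ) := by push_cast; rfl
        rw [this, ← dnn_abs, ← hs'def, dnn_of_mem hs'0 hs'half]
      have hs'L : s' ∈ L := by
        intro δ hδ
        have hδ' : (0:ℝ) < δ / (p:ℝ)^n := by positivity
        rw [frequently_atTop]
        intro a
        obtain ⟨j, hja, hj⟩ := frequently_atTop.mp (hsL _ hδ') a
        refine ⟨j + n, by omega, ?_⟩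
        rw [hshift j n]
        have hd1 := dnn_lipschitz ((p:ℝ)^n * z j) ((p:ℝ)^n * s)
        have hd2 := dnn_lipschitz ((p:ℝ)^n * s) ((p:ℝ)^n * z j)
        have hdist : |(p:ℝ)^n * z j - (p:ℝ)^n * s| < δ := by
          rw [show (p:ℝ)^n * z j - (p:ℝ)^n * s = (p:ℝ)^n * (z j - s) by ring,
            abs_mul, abs_of_pos (by positivity : (0:ℝ) < (p:ℝ)^n)]
          calc (p:ℝ)^n * |z j - s| < (p:ℝ)^n * (δ / (p:ℝ)^n) :=
            mul_lt_mul_of_pos_left hj (by positivity)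
          _ = δ := by field_simp
        have habs2 : |(p:ℝ)^n * s - (p:ℝ)^n * z j| = |(p:ℝ)^n * z j - (p:ℝ)^n * s| :=
          abs_sub_comm _ _
        rw [hdnns] at hd1 hd2
        rw [abs_lt]
        constructor <;> [skip; skip]
        · rw [habs2] at hd2; linarith
        · linarith
      have : s ≤ s' := csInf_le hLbdd hs'L
      linarith
    · -- type 2 interval
      rw [Set.mem_iUnion₂] at h2
      obtain ⟨⟨c, d, n⟩, hT, hmem⟩ := h2
      have hd : 1 ≤ d := hT2 _ hT
      obtain ⟨rε, hrε⟩ := hεrat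
      simp only [I2c, Set.mem_Icc] at hmem
      have hd0 : (0:ℝ) < d := by exact_mod_cast hd
      have hpn0 : (0:ℝ) < (p:ℝ)^n := by positivity
      set m : ℝ := (c:ℝ) / ((p:ℝ)^n * d) with hmdef
      set R : ℝ := ε / ((p:ℝ)^n * (d:ℝ)^2) with hRdef
      have hR0 : 0 < R := by rw [hRdef]; positivity
      have hneL : s ≠ m - R := by
        intro h
        refine hrat ⟨(c:ℚ)/((p:ℚ)^n * d) - rε/((p:ℚ)^n * (d:ℚ)^2), ?_⟩
        rw [h, hmdef, hRdef, hrε]; push_cast; ring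
      have hneR : s ≠ m + R := by
        intro h
        refine hrat ⟨(c:ℚ)/((p:ℚ)^n * d) + rε/((p:ℚ)^n * (d:ℚ)^2), ?_⟩
        rw [h, hmdef, hRdef, hrε]; push_cast; ring
      have hstrict : |s - m| < R := by
        rw [abs_lt]
        constructor
        · have := lt_of_le_of_ne hmem.1 (Ne.symm hneL); linarith
        · have := lt_of_le_of_ne hmem.2 hneR; linarith
      set t : ℝ := (|s - m| + R)/2 with htdef
      have ht1 : |s - m| < t := by rw [htdef]; linarith
      have ht2 : t < R := by rw [htdef]; linarith
      have ht0 : 0 < t := lt_of_le_of_lt (abs_nonneg _) ht1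
      set C : ℝ := (p:ℝ)^n * (d:ℝ)^2 * t with hCdef
      have hCε : C < ε := by
        have : (p:ℝ)^n * (d:ℝ)^2 * R = ε := by rw [hRdef]; field_simp
        rw [hCdef, ← this]
        exact mul_lt_mul_of_pos_left ht2 (by positivity)
      refine lt_of_le_of_lt (liminf_le_of_freq p hp x C d hd ?_) hCε
      rw [frequently_atTop]
      intro a
      have hδ : (0:ℝ) < t - |s - m| := by linarith
      obtain ⟨j, hja, hj⟩ := frequently_atTop.mp (hsL _ hδ) a
      refine ⟨j + n, by omega, ?_⟩
      have he : distNearestInt ((p:ℝ)^(j+n) * d * x)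
          = distNearestInt ((p:ℝ)^n * d * z j) := by
        have h1 : (p:ℝ)^(j+n) * d * x = ((p^n * d : ℕ):ℝ) * ((p:ℝ)^j * x) := by
          push_cast; ring
        rw [h1, ← dnn_nat_mul]
        rw [hzdef]
        simp only []
        congr 1
        push_cast
        ring
      have hmc : ((p:ℝ)^n * d) * m = (c:ℝ) := by
        rw [hmdef]; field_simp
      have hb1 : distNearestInt ((p:ℝ)^n * d * z j) ≤ |(p:ℝ)^n * d * z j - ((c:ℤ):ℝ)| :=
        dnn_le _ _
      have hb2 : |(p:ℝ)^n * d * z j - ((c:ℤ):ℝ)| = (p:ℝ)^n * d * |z j - m| := by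
        rw [show ((c:ℤ):ℝ) = (c:ℝ) by push_cast; rfl, ← hmc,
          show (p:ℝ)^n * d * z j - (p:ℝ)^n * d * m = ((p:ℝ)^n * d) * (z j - m) by ring,
          abs_mul, abs_of_pos (by positivity : (0:ℝ) < (p:ℝ)^n * d)]
      have hzm : |z j - m| < t := by
        calc |z j - m| ≤ |z j - s| + |s - m| := by
              have := abs_sub_abs_le_abs_sub (z j - m) (s - m)
              calc |z j - m| = |(z j - s) + (s - m)| := by ring_nf
              _ ≤ |z j - s| + |s - m| := abs_add_le _ _
        _ < (t - |s - m|) + |s - m| := by linarith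
        _ = t := by ring
      have : distNearestInt ((p:ℝ)^(j+n) * d * x) ≤ (p:ℝ)^n * d * t := by
        rw [he]
        refine le_trans hb1 ?_
        rw [hb2]
        exact mul_le_mul_of_nonneg_left hzm.le (by positivity)
      calc (d:ℝ) * distNearestInt ((p:ℝ)^(j+n) * d * x)
          ≤ (d:ℝ) * ((p:ℝ)^n * d * t) := mul_le_mul_of_nonneg_left this hd0.le
        _ = C := by rw [hCdef]; ring
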